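/- Assume in addition that Δ_k ≠ 0 for all k ≥ 1. Then for every n ≥ 0 one has σ(U_n V_n) = (Δ_{n+1}/Δ_n) · P_n(a_n) · P_n(b_n) (for n = 0 read P_0(a_0) = P_0(b_0) = 1). -/

import Mathlib

open Polynomial

/-- `Apoly a n = ∏_{k=1}^n (z - a_k)`. -/
noncomputable def Apoly (a : ℕ → ℂ) (n : ℕ) : Polynomial ℂ :=
  ∏ k ∈ Finset.range n, (X - C (a (k + 1)))

/-- `ξ_0 = 0`, `ξ_n = κ_n / κ_{n-1}` for `n ≥ 1`. -/
noncomputable def xiSeq (κ : ℕ → ℂ) (n : ℕ) : ℂ :=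
  if n = 0 then 0 else κ n / κ (n - 1)

/-- `U_0 = 1`, `U_n = P_n/A_n - ξ_n P_{n-1}/A_{n-1}` as rational functions. -/
noncomputable def Ufun (P : ℕ → Polynomial ℂ) (a : ℕ → ℂ) (κ : ℕ → ℂ) :
    ℕ → RatFunc ℂ
  | 0 => 1
  | n + 1 =>
      algebraMap (Polynomial ℂ) (RatFunc ℂ) (P (n + 1)) /
          algebraMap (Polynomial ℂ) (RatFunc ℂ) (Apoly a (n + 1)) -
        algebraMap ℂ (RatFunc ℂ) (xiSeq κ (n + 1)) *
          (algebraMap (Polynomial ℂ) (RatFunc ℂ) (P n) /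
            algebraMap (Polynomial ℂ) (RatFunc ℂ) (Apoly a n))

/-- Moments `c_{nm} = σ(1/(A_n B_m))`. -/
noncomputable def momC (σ : RatFunc ℂ →ₗ[ℂ] ℂ) (a b : ℕ → ℂ) (n m : ℕ) : ℂ :=
  σ (1 / algebraMap (Polynomial ℂ) (RatFunc ℂ) (Apoly a n * Apoly b m))

/-- `Δ_0 = 1`, `Δ_n = det (c_{ij})_{0 ≤ i,j ≤ n-1}`. -/
noncomputable def DeltaDet (σ : RatFunc ℂ →ₗ[ℂ] ℂ) (a b : ℕ → ℂ) (n : ℕ) : ℂ :=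
  Matrix.det (Matrix.of fun i j : Fin n => momC σ a b (i : ℕ) (j : ℕ))

noncomputable def Arat (a : ℕ → ℂ) (i n : ℕ) : Polynomial ℂ :=
  ∏ k ∈ Finset.Ico i n, (X - C (a (k + 1)))

lemma Arat_monic (a : ℕ → ℂ) (i n : ℕ) : (Arat a i n).Monic :=
  monic_prod_of_monic _ _ fun k _ => monic_X_sub_C _

lemma Apoly_monic (a : ℕ → ℂ) (n : ℕ) : (Apoly a n).Monic :=
  monic_prod_of_monic _ _ fun k _ => monic_X_sub_C _

lemma Arat_natDegree (a : ℕ → ℂ) {i n : ℕ} (h : i ≤ n) : (Arat a i n).natDegree = n - i := by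
  rw [Arat, natDegree_prod _ _ (fun k _ => X_sub_C_ne_zero _)]
  simp [Nat.card_Ico]

lemma Apoly_eq_mul (a : ℕ → ℂ) {i n : ℕ} (h : i ≤ n) :
    Apoly a n = Apoly a i * Arat a i n := by
  rw [Apoly, Apoly, Arat, Finset.range_eq_Ico, Finset.range_eq_Ico,
    Finset.prod_Ico_consecutive _ (Nat.zero_le i) h]

lemma Arat_self (a : ℕ → ℂ) (n : ℕ) : Arat a n n = 1 := by simp [Arat]

lemma Arat_eval (a : ℕ → ℂ) {i n : ℕ} (h : i < n) : (Arat a i n).eval (a n) = 0 := by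
  rw [Arat, eval_prod]
  refine Finset.prod_eq_zero (i := n - 1) (Finset.mem_Ico.mpr (by omega)) ?_
  have h1 : n - 1 + 1 = n := by omega
  rw [eval_sub, eval_X, eval_C, h1, sub_self]

lemma expand_aux (a : ℕ → ℂ) (n : ℕ) : ∀ j, j ≤ n → ∀ p : Polynomial ℂ, p.natDegree ≤ j →
    ∃ lam : ℕ → ℂ, p = ∑ i ∈ Finset.Icc (n - j) n, C (lam i) * Arat a i n := by
  intro j
  induction j with
  | zero =>
    intro _ p hp
    refine ⟨fun _ => p.coeff 0, ?_⟩
    rw [Nat.sub_zero, Finset.Icc_self, Finset.sum_singleton, Arat_self, mul_one]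
    exact eq_C_of_natDegree_le_zero hp
  | succ j ih =>
    intro hj p hp
    have hdeg : (Arat a (n - (j + 1)) n).natDegree = j + 1 := by
      rw [Arat_natDegree a (Nat.sub_le n (j+1)), Nat.sub_sub_self hj]
    have hgc := (Arat_monic a (n - (j + 1)) n).coeff_natDegree
    rw [hdeg] at hgc
    have hr : (p - C (p.coeff (j+1)) * Arat a (n - (j + 1)) n).natDegree ≤ j := by
      refine natDegree_le_iff_coeff_eq_zero.mpr fun N hN => ?_
      rcases Nat.lt_or_ge (j+1) N with hNl | hNe'
      · have e1 : p.coeff N = 0 := coeff_eq_zero_of_natDegree_lt (lt_of_le_of_lt hp hNl)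
        have e2 : (Arat a (n - (j+1)) n).coeff N = 0 :=
          coeff_eq_zero_of_natDegree_lt (by rw [hdeg]; exact hNl)
        rw [coeff_sub, coeff_C_mul, e1, e2, mul_zero, sub_self]
      · have hNe : N = j + 1 := le_antisymm hNe' hN
        subst hNe
        rw [coeff_sub, coeff_C_mul, hgc, mul_one, sub_self]
    obtain ⟨lam, hl⟩ := ih (Nat.le_of_succ_le hj) _ hr
    refine ⟨fun i => if i = n - (j + 1) then p.coeff (j+1) else lam i, ?_⟩
    have hkey : n - (j + 1) < n - j := by omega
    have hIcc : Finset.Icc (n - (j+1)) n = insert (n - (j+1)) (Finset.Icc (n - j) n) := by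
      rw [show n - j = (n - (j+1)) + 1 by omega, Finset.Icc_add_one_left_eq_Ioc,
        Finset.Ioc_insert_left (show n - (j+1) ≤ n by omega)]
    rw [hIcc, Finset.sum_insert (by simp [Finset.mem_Icc]; omega)]
    have h2 : ∀ i ∈ Finset.Icc (n - j) n,
        C (if i = n - (j+1) then p.coeff (j+1) else lam i) * Arat a i n
          = C (lam i) * Arat a i n := by
      intro i hi
      have hne : i ≠ n - (j+1) := by simp only [Finset.mem_Icc] at hi; omega
      rw [if_neg hne]
    rw [Finset.sum_congr rfl h2, ← hl]
    beta_reduce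
    rw [if_pos rfl]
    ring

lemma expand (a : ℕ → ℂ) (n : ℕ) (p : Polynomial ℂ) (hp : p.natDegree ≤ n) :
    ∃ lam : ℕ → ℂ, p = ∑ i ∈ Finset.range (n + 1), C (lam i) * Arat a i n := by
  obtain ⟨lam, hl⟩ := expand_aux a n n le_rfl p hp
  refine ⟨lam, ?_⟩
  rw [Nat.sub_self] at hl
  rw [Finset.range_eq_Ico, Finset.Ico_add_one_right_eq_Icc]
  exact hl
  
lemma eval_expand (a : ℕ → ℂ) (n : ℕ) (p : Polynomial ℂ) (lam : ℕ → ℂ)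
    (hl : p = ∑ i ∈ Finset.range (n + 1), C (lam i) * Arat a i n) :
    p.eval (a n) = lam n := by
  rw [hl, eval_finset_sum]
  rw [Finset.sum_eq_single n]
  · simp [Arat_self]
  · intro i hi hne
    have : i < n := by simp at hi; omega
    simp [Arat_eval a this]
  · intro h; simp at h

local notation "ι" => algebraMap (Polynomial ℂ) (RatFunc ℂ)

lemma div_eq_div' {p q d e : Polynomial ℂ} (hd : d ≠ 0) (he : e ≠ 0)
    (h : p * e = q * d) : ι p / ι d = ι q / ι e := by
  rw [div_eq_div_iff (RatFunc.algebraMap_ne_zero hd) (RatFunc.algebraMap_ne_zero he),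
    ← map_mul, ← map_mul, h]

lemma smulDivAux (c : ℂ) (q d : Polynomial ℂ) : ι (C c * q) / ι d = c • (ι q / ι d) := by
  rw [map_mul, mul_div_assoc, Algebra.smul_def,
    IsScalarTower.algebraMap_apply ℂ (Polynomial ℂ) (RatFunc ℂ), Polynomial.algebraMap_eq]

/-- expansion of `p / (A_n B_j)` as a combination of `1/(A_i B_j)`. -/
lemma frac_expand (a b : ℕ → ℂ) (n j : ℕ) (p : Polynomial ℂ) (lam : ℕ → ℂ)
    (hl : p = ∑ i ∈ Finset.range (n + 1), C (lam i) * Arat a i n) :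
    ι p / ι (Apoly a n * Apoly b j)
      = ∑ i ∈ Finset.range (n + 1), lam i • (1 / ι (Apoly a i * Apoly b j)) := by
  rw [hl, map_sum, Finset.sum_div]
  refine Finset.sum_congr rfl fun i hi => ?_
  have hi' : i ≤ n := by simp at hi; omega
  rw [smulDivAux]
  congr 1
  rw [show (1 : RatFunc ℂ) = ι 1 from (map_one _).symm]
  refine div_eq_div' (mul_ne_zero (Apoly_monic a n).ne_zero (Apoly_monic b j).ne_zero)
    (mul_ne_zero (Apoly_monic a i).ne_zero (Apoly_monic b j).ne_zero) ?_
  rw [Apoly_eq_mul a hi']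
  ring

/-- expansion of `p / A_n` as a combination of `1/A_i`. -/
lemma frac_expand1 (a : ℕ → ℂ) (n : ℕ) (p : Polynomial ℂ) (lam : ℕ → ℂ)
    (hl : p = ∑ i ∈ Finset.range (n + 1), C (lam i) * Arat a i n) :
    ι p / ι (Apoly a n)
      = ∑ i ∈ Finset.range (n + 1), lam i • (1 / ι (Apoly a i)) := by
  rw [hl, map_sum, Finset.sum_div]
  refine Finset.sum_congr rfl fun i hi => ?_
  have hi' : i ≤ n := by simp at hi; omega
  rw [smulDivAux]
  congr 1
  rw [show (1 : RatFunc ℂ) = ι 1 from (map_one _).symm]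
  refine div_eq_div' (Apoly_monic a n).ne_zero (Apoly_monic a i).ne_zero ?_
  rw [Apoly_eq_mul a hi']
  ring

/- part 3 -/
lemma sigma_orth (a b : ℕ → ℂ) (P : ℕ → Polynomial ℂ) (κ : ℕ → ℂ) (σ : RatFunc ℂ →ₗ[ℂ] ℂ)
    (hσ : ∀ (n : ℕ) (q : Polynomial ℂ), q.degree ≤ (n : ℕ) →
      σ (ι (P n * q) / ι (Apoly a n * Apoly b n)) = q.coeff n * κ n)
    (n j : ℕ) (hj : j ≤ n) :
    σ (ι (P n) / ι (Apoly a n * Apoly b j)) = if j = 0 then κ n else 0 := by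
  have h1 : ι (P n) / ι (Apoly a n * Apoly b j)
      = ι (P n * Arat b j n) / ι (Apoly a n * Apoly b n) := by
    refine div_eq_div' (mul_ne_zero (Apoly_monic a n).ne_zero (Apoly_monic b j).ne_zero)
      (mul_ne_zero (Apoly_monic a n).ne_zero (Apoly_monic b n).ne_zero) ?_
    rw [Apoly_eq_mul b hj]; ring
  have hdeg : (Arat b j n).degree ≤ (n : ℕ) :=
    natDegree_le_iff_degree_le.mp (by rw [Arat_natDegree b hj]; omega)
  rw [h1, hσ n _ hdeg]
  rcases Nat.eq_zero_or_pos j with h0 | hpos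
  · subst h0
    rw [if_pos rfl]
    have hc : (Arat b 0 n).coeff n = 1 := by
      have h := (Arat_monic b 0 n).coeff_natDegree
      rwa [Arat_natDegree b (Nat.zero_le n), Nat.sub_zero] at h
    rw [hc, one_mul]
  · rw [if_neg (by omega)]
    have hc : (Arat b j n).coeff n = 0 :=
      coeff_eq_zero_of_natDegree_lt (by rw [Arat_natDegree b hj]; omega)
    rw [hc, zero_mul]

lemma sum_mom (a b : ℕ → ℂ) (P : ℕ → Polynomial ℂ) (κ : ℕ → ℂ) (σ : RatFunc ℂ →ₗ[ℂ] ℂ)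
    (hσ : ∀ (n : ℕ) (q : Polynomial ℂ), q.degree ≤ (n : ℕ) →
      σ (ι (P n * q) / ι (Apoly a n * Apoly b n)) = q.coeff n * κ n)
    (n j : ℕ) (hj : j ≤ n) (lam : ℕ → ℂ)
    (hl : P n = ∑ i ∈ Finset.range (n + 1), C (lam i) * Arat a i n) :
    ∑ i ∈ Finset.range (n + 1), lam i * momC σ a b i j = if j = 0 then κ n else 0 := by
  have h := frac_expand a b n j (P n) lam hl
  have h2 : σ (ι (P n) / ι (Apoly a n * Apoly b j))
      = ∑ i ∈ Finset.range (n + 1), lam i * momC σ a b i j := by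
    rw [h, map_sum]
    exact Finset.sum_congr rfl fun i _ => by rw [LinearMap.map_smul, smul_eq_mul, momC]
  rw [← h2, sigma_orth a b P κ σ hσ n j hj]

lemma det_aux {m : ℕ} (C : Matrix (Fin (m + 1)) (Fin (m + 1)) ℂ) (u : Fin (m + 1) → ℂ)
    (hu : ∀ j, j ≠ Fin.last m → ∑ i, u i * C i j = 0) :
    (∑ i, u i * C i (Fin.last m)) * (C.submatrix Fin.castSucc Fin.castSucc).det
      = u (Fin.last m) * C.det := by
  set s := ∑ i, u i * C i (Fin.last m) with hs
  have h1 := Matrix.det_updateRow_sum C (Fin.last m) u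
  have hrow : (∑ k, u k • C k) = Pi.single (Fin.last m) s := by
    funext j
    rcases eq_or_ne j (Fin.last m) with h | h
    · subst h
      rw [Pi.single_eq_same, hs, Finset.sum_apply]
      exact Finset.sum_congr rfl fun k _ => rfl
    · rw [Pi.single_eq_of_ne h, Finset.sum_apply]
      simpa [smul_eq_mul] using hu j h
  rw [hrow] at h1
  have hsingle : (Pi.single (Fin.last m) s : Fin (m + 1) → ℂ) = s • (Pi.single (Fin.last m) 1 : Fin (m + 1) → ℂ) := by
    funext j
    rcases eq_or_ne j (Fin.last m) with h | h
    · subst h; simp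
    · simp [Pi.single_eq_of_ne h]
  rw [hsingle, Matrix.det_updateRow_smul] at h1
  have h2 : (C.updateRow (Fin.last m) (Pi.single (Fin.last m) 1)).det
      = (C.submatrix Fin.castSucc Fin.castSucc).det := by
    rw [Matrix.det_succ_row _ (Fin.last m), Finset.sum_eq_single (Fin.last m)]
    · rw [Matrix.updateRow_self, Pi.single_eq_same, mul_one]
      have hpow : ((-1 : ℂ)) ^ ((Fin.last m : ℕ) + (Fin.last m : ℕ)) = 1 :=
        Even.neg_one_pow ⟨(Fin.last m : ℕ), rfl⟩
      rw [hpow, one_mul, Fin.succAbove_last]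
      congr 1
      ext i j
      simp [Matrix.updateRow_ne (ne_of_lt (Fin.castSucc_lt_last i))]
    · intro j _ hj
      rw [Matrix.updateRow_self, Pi.single_eq_of_ne hj, mul_zero, zero_mul]
    · intro h; exact absurd (Finset.mem_univ _) h
  rw [h2] at h1
  simpa using h1

lemma Ufun_expand (P : ℕ → Polynomial ℂ) (a : ℕ → ℂ) (κ : ℕ → ℂ) (n : ℕ) (la la' : ℕ → ℂ)
    (hla : P (n+1) = ∑ i ∈ Finset.range (n + 2), C (la i) * Arat a i (n+1))
    (hla' : P n = ∑ i ∈ Finset.range (n + 1), C (la' i) * Arat a i n) :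
    Ufun P a κ (n+1) = ∑ i ∈ Finset.range (n + 2),
      (la i - xiSeq κ (n+1) * (if i = n+1 then 0 else la' i)) • (1 / ι (Apoly a i)) := by
  have h0 : Ufun P a κ (n+1) = ι (P (n+1)) / ι (Apoly a (n+1)) -
      algebraMap ℂ (RatFunc ℂ) (xiSeq κ (n+1)) * (ι (P n) / ι (Apoly a n)) := rfl
  rw [h0, frac_expand1 a (n+1) _ la hla, frac_expand1 a n _ la' hla',
    ← Algebra.smul_def, Finset.smul_sum]
  have hsplit : ∑ i ∈ Finset.range (n + 2),
      (la i - xiSeq κ (n+1) * (if i = n+1 then 0 else la' i)) • (1 / ι (Apoly a i))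
      = ∑ i ∈ Finset.range (n + 2), (la i • (1 / ι (Apoly a i)) -
          (xiSeq κ (n+1) * (if i = n+1 then 0 else la' i)) • (1 / ι (Apoly a i))) :=
    Finset.sum_congr rfl fun i _ => sub_smul _ _ _
  rw [hsplit, Finset.sum_sub_distrib]
  congr 1
  rw [Finset.sum_range_succ
    (fun i => (xiSeq κ (n+1) * (if i = n+1 then 0 else la' i)) • (1 / ι (Apoly a i))) (n+1)]
  rw [if_pos rfl, mul_zero, zero_smul, add_zero]
  refine Finset.sum_congr rfl fun i hi => ?_
  have hne : i ≠ n+1 := by simp at hi; omega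
  rw [if_neg hne, mul_smul]


/-- Determinantal formula for the biorthogonality normalization constants:
`σ(U_n V_n) = (Δ_{n+1}/Δ_n) P_n(a_n) P_n(b_n)`. -/
theorem stmt2 (a b : ℕ → ℂ) (P : ℕ → Polynomial ℂ) (κ : ℕ → ℂ)
    (σ : RatFunc ℂ →ₗ[ℂ] ℂ)
    (hP0 : P 0 = 1) (hPmonic : ∀ n, (P n).Monic) (hPdeg : ∀ n, (P n).natDegree = n)
    (hκ : ∀ n, κ n ≠ 0)
    (hσ : ∀ (n : ℕ) (q : Polynomial ℂ), q.degree ≤ (n : ℕ) →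
      σ (algebraMap (Polynomial ℂ) (RatFunc ℂ) (P n * q) /
          algebraMap (Polynomial ℂ) (RatFunc ℂ) (Apoly a n * Apoly b n)) =
        q.coeff n * κ n)
    (hΔ : ∀ k, 1 ≤ k → DeltaDet σ a b k ≠ 0) :
    ∀ n : ℕ, σ (Ufun P a κ n * Ufun P b κ n) =
      DeltaDet σ a b (n + 1) / DeltaDet σ a b n *
        ((P n).eval (a n) * (P n).eval (b n)) := by
  intro n
  cases n with
  | zero =>
    have hA0 : Apoly a 0 = 1 := by simp [Apoly]
    have hB0 : Apoly b 0 = 1 := by simp [Apoly]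
    have hD1 : DeltaDet σ a b 1 = momC σ a b 0 0 := Matrix.det_fin_one _
    have hD0 : DeltaDet σ a b 0 = 1 := Matrix.det_fin_zero
    have hU0 : Ufun P a κ 0 = 1 := rfl
    have hV0 : Ufun P b κ 0 = 1 := rfl
    have h00 : momC σ a b 0 0 = σ 1 := by
      simp only [momC, hA0, hB0, mul_one, map_one]
      norm_num
    rw [hU0, hV0, hD1, hD0, h00, hP0]
    simp
  | succ n =>
    obtain ⟨la, hla⟩ := expand a (n+1) (P (n+1)) (le_of_eq (hPdeg (n+1)))
    obtain ⟨la', hla'⟩ := expand a n (P n) (le_of_eq (hPdeg n))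
    obtain ⟨lb, hlb⟩ := expand b (n+1) (P (n+1)) (le_of_eq (hPdeg (n+1)))
    obtain ⟨lb', hlb'⟩ := expand b n (P n) (le_of_eq (hPdeg n))
    have hξ : xiSeq κ (n+1) = κ (n+1) / κ n := by simp [xiSeq]
    set u : ℕ → ℂ := fun i => la i - xiSeq κ (n+1) * (if i = n+1 then 0 else la' i) with hu
    set v : ℕ → ℂ := fun j => lb j - xiSeq κ (n+1) * (if j = n+1 then 0 else lb' j) with hv
    have hU : Ufun P a κ (n+1) = ∑ i ∈ Finset.range (n+2), u i • (1 / ι (Apoly a i)) :=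
      Ufun_expand P a κ n la la' hla hla'
    have hV : Ufun P b κ (n+1) = ∑ j ∈ Finset.range (n+2), v j • (1 / ι (Apoly b j)) :=
      Ufun_expand P b κ n lb lb' hlb hlb'
    have hprod : Ufun P a κ (n+1) * Ufun P b κ (n+1)
        = ∑ i ∈ Finset.range (n+2), ∑ j ∈ Finset.range (n+2),
            (u i * v j) • (1 / ι (Apoly a i * Apoly b j)) := by
      rw [hU, hV, Finset.sum_mul_sum]
      refine Finset.sum_congr rfl fun i _ => Finset.sum_congr rfl fun j _ => ?_
      rw [smul_mul_smul_comm]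
      congr 1
      rw [div_mul_div_comm, one_mul, map_mul]
    have hUV : σ (Ufun P a κ (n+1) * Ufun P b κ (n+1))
        = ∑ i ∈ Finset.range (n+2), ∑ j ∈ Finset.range (n+2),
            (u i * v j) * momC σ a b i j := by
      rw [hprod, map_sum]
      refine Finset.sum_congr rfl fun i _ => ?_
      rw [map_sum]
      exact Finset.sum_congr rfl fun j _ => by rw [LinearMap.map_smul, smul_eq_mul]; rfl
    have hcol : ∀ j : ℕ, j ≤ n → ∑ i ∈ Finset.range (n+2), u i * momC σ a b i j = 0 := by
      intro j hj
      have hS1 := sum_mom a b P κ σ hσ (n+1) j (by omega) la hla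
      have hS2 := sum_mom a b P κ σ hσ n j hj la' hla'
      have hsplit : ∑ i ∈ Finset.range (n+2), u i * momC σ a b i j
          = ∑ i ∈ Finset.range (n+2), (la i * momC σ a b i j
              - (xiSeq κ (n+1) * (if i = n+1 then 0 else la' i)) * momC σ a b i j) :=
        Finset.sum_congr rfl fun i _ => by simp only [hu]; ring
      rw [hsplit, Finset.sum_sub_distrib, hS1]
      rw [Finset.sum_range_succ
        (fun i => (xiSeq κ (n+1) * (if i = n+1 then 0 else la' i)) * momC σ a b i j) (n+1),
        if_pos rfl, mul_zero, zero_mul, add_zero]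
      have hfac : ∑ i ∈ Finset.range (n+1),
            (xiSeq κ (n+1) * (if i = n+1 then 0 else la' i)) * momC σ a b i j
          = xiSeq κ (n+1) * ∑ i ∈ Finset.range (n+1), la' i * momC σ a b i j := by
        rw [Finset.mul_sum]
        refine Finset.sum_congr rfl fun i hi => ?_
        have hne : i ≠ n+1 := by simp at hi; omega
        rw [if_neg hne]; ring
      rw [hfac, hS2]
      rcases eq_or_ne j 0 with h0 | h0
      · rw [if_pos h0, if_pos h0, hξ, div_mul_cancel₀ _ (hκ n), sub_self]
      · rw [if_neg h0, if_neg h0, mul_zero, sub_zero]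
    set M : Matrix (Fin (n+2)) (Fin (n+2)) ℂ :=
      Matrix.of (fun i j : Fin (n+2) => momC σ a b (i : ℕ) (j : ℕ)) with hM
    set uf : Fin (n+2) → ℂ := fun i => u (i : ℕ) with hufdef
    set vf : Fin (n+2) → ℂ := fun j => v (j : ℕ) with hvfdef
    have hu0 : ∀ j : Fin (n+2), j ≠ Fin.last (n+1) → ∑ i, uf i * M i j = 0 := by
      intro j hj
      have hjn : (j : ℕ) ≤ n := by
        have h1 : (j : ℕ) < n + 2 := j.isLt
        have h2 : (j : ℕ) ≠ n + 1 := fun h => hj (Fin.ext h)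
        omega
      calc ∑ i, uf i * M i j
          = ∑ i ∈ Finset.range (n+2), u i * momC σ a b i (j : ℕ) :=
            Fin.sum_univ_eq_sum_range (fun i => u i * momC σ a b i (j : ℕ)) (n+2)
        _ = 0 := hcol (j : ℕ) hjn
    have hkey := det_aux M uf hu0
    have hdet1 : M.det = DeltaDet σ a b (n+2) := rfl
    have hdet2 : (M.submatrix Fin.castSucc Fin.castSucc).det = DeltaDet σ a b (n+1) := rfl
    have hula : (P (n+1)).eval (a (n+1)) = uf (Fin.last (n+1)) := by
      rw [eval_expand a (n+1) (P (n+1)) la hla]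
      show la (n+1) = u (n+1)
      simp [hu]
    have hvlb : (P (n+1)).eval (b (n+1)) = vf (Fin.last (n+1)) := by
      rw [eval_expand b (n+1) (P (n+1)) lb hlb]
      show lb (n+1) = v (n+1)
      simp [hv]
    have hdouble : σ (Ufun P a κ (n+1) * Ufun P b κ (n+1))
        = ∑ j : Fin (n+2), vf j * ∑ i, uf i * M i j := by
      rw [hUV]
      have h1 : ∑ i ∈ Finset.range (n+2), ∑ j ∈ Finset.range (n+2),
            (u i * v j) * momC σ a b i j
          = ∑ i : Fin (n+2), ∑ j : Fin (n+2), (uf i * vf j) * M i j := by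
        rw [← Fin.sum_univ_eq_sum_range
          (fun i => ∑ j ∈ Finset.range (n+2), (u i * v j) * momC σ a b i j) (n+2)]
        refine Finset.sum_congr rfl fun i _ => ?_
        exact (Fin.sum_univ_eq_sum_range
          (fun j => (u (i : ℕ) * v j) * momC σ a b (i : ℕ) j) (n+2)).symm
      rw [h1, Finset.sum_comm]
      refine Finset.sum_congr rfl fun j _ => ?_
      rw [Finset.mul_sum]
      exact Finset.sum_congr rfl fun i _ => by ring
    have hsingle : (∑ j : Fin (n+2), vf j * ∑ i, uf i * M i j)
        = vf (Fin.last (n+1)) * ∑ i, uf i * M i (Fin.last (n+1)) :=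
      Finset.sum_eq_single _ (fun j _ hj => by rw [hu0 j hj, mul_zero])
        (fun h => absurd (Finset.mem_univ _) h)
    have hΔ' : DeltaDet σ a b (n+1) ≠ 0 := hΔ (n+1) (by omega)
    rw [hdouble, hsingle]
    rw [div_mul_eq_mul_div, eq_div_iff hΔ']
    rw [hdet2, hdet1] at hkey
    rw [hula, hvlb]
    linear_combination (vf (Fin.last (n+1))) * hkey
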